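/- The spectral bound is sharp for χ(Z^n, B¹₂) = 2n: choosing coefficients c = 1/(2n−1) on the orbit of 2ϖ₁ and 1−c on the orbit of ϖ₂ (for the root system Cₙ), one has c·T_{2ϖ₁}(z) + (1−c)·T_{ϖ₂}(z) = (2n z₁² − 1)/(2n − 1) ≥ −1/(2n−1) on the Chebyshev image, giving χ(Z^n, B¹₂) ≥ 2n, which matches the known upper bound. -/

import Mathlib

noncomputable section
open scoped BigOperators

abbrev EV (n : ℕ) := EuclideanSpace ℝ (Fin n)

/-- The hyperoctahedral group `Sₙ ⋉ {±1}ⁿ` (the Weyl group of `Bₙ`/`Cₙ`) acting on `ℝⁿ`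
by permutations and sign changes of coordinates. -/
def sgnAct {n : ℕ} (g : Equiv.Perm (Fin n) × (Fin n → Bool)) (μ : EV n) : EV n :=
  WithLp.toLp 2 (fun j => (if g.2 j then (1 : ℝ) else -1) * μ (g.1 j))

/-- The generalized cosine for the Weyl group of `Bₙ`/`Cₙ`. -/
def cGencos {n : ℕ} (μ u : EV n) : ℂ :=
  ((Fintype.card (Equiv.Perm (Fin n) × (Fin n → Bool)) : ℂ))⁻¹ *
    ∑ g : Equiv.Perm (Fin n) × (Fin n → Bool),
      Complex.exp (-(2 * Real.pi * Complex.I) * ((inner ℝ (sgnAct g μ) u : ℝ) : ℂ))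

/-- The fundamental weight `ϖ₁ = e₁` of `Cₙ`. -/
def cϖ₁ {n : ℕ} : EV n := WithLp.toLp 2 (fun j => if (j : ℕ) = 0 then 1 else 0)

/-- The fundamental weight `ϖ₂ = e₁ + e₂` of `Cₙ`/`Bₙ`. -/
def cϖ₂ {n : ℕ} : EV n := WithLp.toLp 2 (fun j => if (j : ℕ) < 2 then 1 else 0)

open Finset in
lemma Bsum {ι : Type*} [Fintype ι] [DecidableEq ι] (i : ι) (G : Bool → ℂ) :
    ∑ ε : ι → Bool, G (ε i) = 2 ^ (Fintype.card ι - 1) * (G true + G false) := by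
  rw [← Equiv.sum_comp (Equiv.funSplitAt i Bool).symm (fun ε => G (ε i))]
  simp only [Equiv.funSplitAt_symm_apply, dif_pos rfl]
  rw [Fintype.sum_prod_type]
  simp [Finset.sum_const, Fintype.card_fun, Fintype.card_subtype_compl, mul_comm,
    Fintype.sum_bool, add_comm]
  ring

open Finset in
lemma Bsum2 {ι : Type*} [Fintype ι] [DecidableEq ι] {i i' : ι} (h : i' ≠ i)
    (G : Bool → Bool → ℂ) :
    ∑ ε : ι → Bool, G (ε i) (ε i')
      = 2 ^ (Fintype.card ι - 2) *
        ((G true true + G true false) + (G false true + G false false)) := by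
  rw [← Equiv.sum_comp (Equiv.funSplitAt i Bool).symm (fun ε => G (ε i) (ε i'))]
  have hc : ∀ p : Bool × ({j // j ≠ i} → Bool),
      G (((Equiv.funSplitAt i Bool).symm p) i) (((Equiv.funSplitAt i Bool).symm p) i')
        = G p.1 (p.2 ⟨i', h⟩) := by
    intro p; simp [Equiv.funSplitAt_symm_apply, h]
  rw [Fintype.sum_congr _ _ hc, Fintype.sum_prod_type, Fintype.sum_bool,
    Bsum (⟨i', h⟩ : {j // j ≠ i}) (G true), Bsum (⟨i', h⟩ : {j // j ≠ i}) (G false)]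
  have hcard : Fintype.card {j // j ≠ i} - 1 = Fintype.card ι - 2 := by
    rw [Fintype.card_subtype_compl]
    simp [Fintype.card_subtype_eq]
    omega
  rw [hcard]; ring


open Finset Equiv in
lemma Psum1 {m : ℕ} (f : Fin (m + 1) → ℂ) :
    ∑ σ : Equiv.Perm (Fin (m + 1)), f (σ 0) = (m.factorial : ℂ) * ∑ j, f j := by
  rw [← Equiv.sum_comp Equiv.Perm.decomposeFin.symm (fun σ => f (σ 0))]
  rw [Fintype.sum_prod_type]
  simp only [Equiv.Perm.decomposeFin_symm_apply_zero]
  rw [Finset.sum_comm]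
  simp [Finset.sum_const, Fintype.card_perm, mul_comm]

open Finset Equiv in
lemma Psum2 {m : ℕ} (f : Fin (m + 2) → Fin (m + 2) → ℂ) :
    ∑ σ : Equiv.Perm (Fin (m + 2)), f (σ 0) (σ 1)
      = (m.factorial : ℂ) * ∑ p, ((∑ j, f p j) - f p p) := by
  rw [← Equiv.sum_comp Equiv.Perm.decomposeFin.symm (fun σ => f (σ 0) (σ 1))]
  rw [Fintype.sum_prod_type]
  have h1 : ∀ (p : Fin (m + 2)) (e : Equiv.Perm (Fin (m + 1))),
      f (Equiv.Perm.decomposeFin.symm (p, e) 0) (Equiv.Perm.decomposeFin.symm (p, e) 1)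
        = f p (Equiv.swap 0 p ((e 0).succ)) := by
    intro p e
    rw [Equiv.Perm.decomposeFin_symm_apply_zero, ← Fin.succ_zero_eq_one,
      Equiv.Perm.decomposeFin_symm_apply_succ]
  simp only [h1]
  have h2 : ∀ p : Fin (m + 2), ∑ e : Equiv.Perm (Fin (m + 1)), f p (Equiv.swap 0 p ((e 0).succ))
      = (m.factorial : ℂ) * ((∑ j, f p j) - f p p) := by
    intro p
    rw [Psum1 (fun q => f p (Equiv.swap 0 p q.succ))]
    congr 1
    have h3 : ∑ x : Fin (m + 2), f p (Equiv.swap 0 p x)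
        = f p (Equiv.swap 0 p 0) + ∑ q : Fin (m + 1), f p (Equiv.swap 0 p q.succ) :=
      Fin.sum_univ_succ (fun x => f p (Equiv.swap 0 p x))
    rw [Equiv.sum_comp (Equiv.swap 0 p) (f p), Equiv.swap_apply_left] at h3
    rw [eq_comm, sub_eq_iff_eq_add, h3]; ring
  rw [Finset.sum_congr rfl (fun p _ => h2 p), ← Finset.mul_sum]



lemma inner_single {n : ℕ} [NeZero n] (t : ℝ) (σ : Equiv.Perm (Fin n)) (ε : Fin n → Bool)
    (u : EV n) :
    (inner ℝ (sgnAct (σ, ε) (WithLp.toLp 2 (fun j => if (j : ℕ) = 0 then t else 0) : EV n)) u : ℝ)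
      = (if ε (σ.symm 0) then (1:ℝ) else -1) * (t * u (σ.symm 0)) := by
  rw [PiLp.inner_apply]
  simp only [RCLike.inner_apply]
  have h : ∀ j : Fin n, (starRingEnd ℝ) (sgnAct (σ, ε) (WithLp.toLp 2 (fun j => if (j : ℕ) = 0 then t else 0) : EV n) j) * u j
      = if j = σ.symm 0 then (if ε j then (1:ℝ) else -1) * (t * u j) else 0 := by
    intro j
    by_cases hj : j = σ.symm 0
    · subst hj
      simp [sgnAct, mul_assoc]
    · have : σ j ≠ 0 := fun hc => hj (by simpa using congrArg σ.symm hc)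
      have hv : ((σ j : Fin n) : ℕ) ≠ 0 := by
        rwa [Ne, Fin.val_eq_zero_iff]
      simp [sgnAct, hv, hj, this]
  rw [Finset.sum_congr rfl (fun j _ => (mul_comm _ _).trans (h j)), Finset.sum_ite_eq' Finset.univ (σ.symm 0)]
  simp

open Real Complex in
lemma exp_pair (a : ℝ) :
    Complex.exp (-(2 * Real.pi * Complex.I) * ((1 * a : ℝ) : ℂ))
      + Complex.exp (-(2 * Real.pi * Complex.I) * (((-1) * a : ℝ) : ℂ))
      = 2 * ((Real.cos (2 * Real.pi * a) : ℝ) : ℂ) := by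
  have h := Complex.two_cos (x := ((2 * Real.pi * a : ℝ) : ℂ))
  rw [← Complex.ofReal_cos] at h
  rw [h, add_comm]
  congr 1 <;> · congr 1; push_cast; ring

open Real Complex Equiv in
lemma gencos_single {m : ℕ} (t : ℝ) (u : EV (m + 1)) :
    cGencos (WithLp.toLp 2 (fun j => if (j : ℕ) = 0 then t else 0) : EV (m + 1)) u
      = ((∑ j, Real.cos (2 * Real.pi * (t * u j)) : ℝ) : ℂ) / (m + 1) := by
  rw [cGencos, Fintype.sum_prod_type]
  have h1 : ∀ σ : Perm (Fin (m + 1)),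
      (∑ ε : Fin (m + 1) → Bool, Complex.exp (-(2 * Real.pi * Complex.I) *
        ((inner ℝ (sgnAct (σ, ε) (WithLp.toLp 2 (fun j => if (j : ℕ) = 0 then t else 0) : EV (m+1))) u : ℝ) : ℂ)))
      = 2 ^ m * (2 * ((Real.cos (2 * Real.pi * (t * u (σ.symm 0))) : ℝ) : ℂ)) := by
    intro σ
    have hc : ∀ ε : Fin (m+1) → Bool,
        Complex.exp (-(2 * Real.pi * Complex.I) *
          ((inner ℝ (sgnAct (σ, ε) (WithLp.toLp 2 (fun j => if (j : ℕ) = 0 then t else 0) : EV (m+1))) u : ℝ) : ℂ))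
        = (fun b => Complex.exp (-(2 * Real.pi * Complex.I) *
            (((if b then (1:ℝ) else -1) * (t * u (σ.symm 0)) : ℝ) : ℂ))) (ε (σ.symm 0)) := by
      intro ε
      rw [inner_single]
    rw [Finset.sum_congr rfl (fun ε _ => hc ε),
      Bsum (σ.symm 0) (fun b => Complex.exp (-(2 * Real.pi * Complex.I) *
            (((if b then (1:ℝ) else -1) * (t * u (σ.symm 0)) : ℝ) : ℂ)))]
    have : Fintype.card (Fin (m+1)) - 1 = m := by simp
    rw [this]
    congr 1
    simpa using exp_pair (t * u (σ.symm 0))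
  rw [Finset.sum_congr rfl (fun σ _ => h1 σ)]
  have h2 : ∑ σ : Perm (Fin (m+1)),
        (2:ℂ) ^ m * (2 * ((Real.cos (2 * Real.pi * (t * u (σ.symm 0))) : ℝ) : ℂ))
      = ∑ σ : Perm (Fin (m+1)),
        (2:ℂ) ^ m * (2 * ((Real.cos (2 * Real.pi * (t * u (σ 0))) : ℝ) : ℂ)) := by
    rw [← Equiv.sum_comp (Equiv.inv (Perm (Fin (m+1))))
      (fun σ => (2:ℂ) ^ m * (2 * ((Real.cos (2 * Real.pi * (t * u (σ 0))) : ℝ) : ℂ)))]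
    rfl
  rw [h2, ← Finset.mul_sum, Psum1 (fun j => (2 * ((Real.cos (2 * Real.pi * (t * u j)) : ℝ) : ℂ)))]
  rw [Fintype.card_prod, Fintype.card_perm, Fintype.card_fun]
  simp only [Fintype.card_fin, Fintype.card_bool]
  rw [Complex.ofReal_sum, ← Finset.mul_sum]
  have hfac : ((m).factorial : ℂ) ≠ 0 := by exact_mod_cast (Nat.factorial_ne_zero _)
  have hm1 : ((m:ℂ) + 1) ≠ 0 := by exact_mod_cast (Nat.cast_add_one_ne_zero (R := ℂ) m)
  have h2n : ((2:ℂ)) ^ (m+1) ≠ 0 := pow_ne_zero _ two_ne_zero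
  rw [Nat.factorial_succ]
  push_cast
  field_simp
  ring

open Real Complex in
lemma exp_split (a b : ℝ) :
    Complex.exp (-(2*Real.pi*Complex.I) * ((a + b : ℝ):ℂ))
      = Complex.exp (-(2*Real.pi*Complex.I) * ((a : ℝ):ℂ))
        * Complex.exp (-(2*Real.pi*Complex.I) * ((b : ℝ):ℂ)) := by
  rw [← Complex.exp_add]
  congr 1
  push_cast
  ring

open Real Complex in
lemma quad (x y : ℝ) :
    (Complex.exp (-(2*Real.pi*Complex.I) * ((1*x + 1*y : ℝ):ℂ))
      + Complex.exp (-(2*Real.pi*Complex.I) * ((1*x + -1*y : ℝ):ℂ)))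
    + (Complex.exp (-(2*Real.pi*Complex.I) * ((-1*x + 1*y : ℝ):ℂ))
      + Complex.exp (-(2*Real.pi*Complex.I) * ((-1*x + -1*y : ℝ):ℂ)))
    = (2 * ((Real.cos (2*Real.pi*x) : ℝ):ℂ)) * (2 * ((Real.cos (2*Real.pi*y) : ℝ):ℂ)) := by
  rw [exp_split, exp_split, exp_split, exp_split, ← exp_pair x, ← exp_pair y]
  ring

open Real Complex Equiv in
lemma inner_pair {m : ℕ} (σ : Equiv.Perm (Fin (m+2))) (ε : Fin (m+2) → Bool) (u : EV (m+2)) :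
    (inner ℝ (sgnAct (σ, ε) (WithLp.toLp 2 (fun j => if (j : ℕ) < 2 then 1 else 0) : EV (m+2))) u : ℝ)
      = (if ε (σ.symm 0) then (1:ℝ) else -1) * u (σ.symm 0)
        + (if ε (σ.symm 1) then (1:ℝ) else -1) * u (σ.symm 1) := by
  rw [PiLp.inner_apply]
  simp only [RCLike.inner_apply]
  have hne : σ.symm 0 ≠ σ.symm 1 := by
    intro hc
    have : (0 : Fin (m+2)) = 1 := σ.symm.injective hc
    simp [Fin.ext_iff] at this
  have h : ∀ j : Fin (m+2),
      (starRingEnd ℝ) (sgnAct (σ, ε) (WithLp.toLp 2 (fun j => if (j : ℕ) < 2 then 1 else 0) : EV (m+2)) j) * u j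
      = (if j = σ.symm 0 then (if ε j then (1:ℝ) else -1) * u j else 0)
        + (if j = σ.symm 1 then (if ε j then (1:ℝ) else -1) * u j else 0) := by
    intro j
    by_cases h0 : j = σ.symm 0
    · have h1 : j ≠ σ.symm 1 := h0 ▸ hne
      subst h0
      simp [sgnAct, h1]
    · by_cases h1 : j = σ.symm 1
      · subst h1
        simp [sgnAct, h0]
      · have hv0 : σ j ≠ 0 := fun hc => h0 (by simpa using congrArg σ.symm hc)
        have hv1 : σ j ≠ 1 := fun hc => h1 (by simpa using congrArg σ.symm hc)
        have : ¬ ((σ j : ℕ) < 2) := by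
          have e0 : ((σ j : Fin (m+2)) : ℕ) ≠ 0 := fun hc => hv0 (Fin.ext (hc.trans (Fin.val_zero _).symm))
          have e1 : ((σ j : Fin (m+2)) : ℕ) ≠ 1 := fun hc => hv1 (Fin.ext (hc.trans (Fin.val_one _).symm))
          omega
        simp [sgnAct, this, h0, h1, show ¬ ((σ j : ℕ) ≤ 1) by omega]
  rw [Finset.sum_congr rfl (fun j _ => (mul_comm _ _).trans (h j)), Finset.sum_add_distrib,
    Finset.sum_ite_eq' Finset.univ (σ.symm 0), Finset.sum_ite_eq' Finset.univ (σ.symm 1)]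
  simp

open Real Complex Equiv in
lemma gencos_pair {m : ℕ} (u : EV (m + 2)) :
    cGencos (WithLp.toLp 2 (fun j => if (j : ℕ) < 2 then 1 else 0) : EV (m + 2)) u
      = ((((∑ j, Real.cos (2 * Real.pi * u j)) ^ 2
          - ∑ j, (Real.cos (2 * Real.pi * u j)) ^ 2 : ℝ)) : ℂ) / ((m + 2) * (m + 1)) := by
  rw [cGencos, Fintype.sum_prod_type]
  set c : Fin (m+2) → ℂ := fun j => ((Real.cos (2 * Real.pi * u j) : ℝ) : ℂ) with hc
  have h1 : ∀ σ : Perm (Fin (m + 2)),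
      (∑ ε : Fin (m + 2) → Bool, Complex.exp (-(2 * Real.pi * Complex.I) *
        ((inner ℝ (sgnAct (σ, ε) (WithLp.toLp 2 (fun j => if (j : ℕ) < 2 then 1 else 0) : EV (m+2))) u : ℝ) : ℂ)))
      = 2 ^ m * ((2 * c (σ.symm 0)) * (2 * c (σ.symm 1))) := by
    intro σ
    have hne : σ.symm 1 ≠ σ.symm 0 := by
      intro hcc
      have : (1 : Fin (m+2)) = 0 := σ.symm.injective hcc
      simp [Fin.ext_iff] at this
    have hcg : ∀ ε : Fin (m+2) → Bool,
        Complex.exp (-(2 * Real.pi * Complex.I) *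
          ((inner ℝ (sgnAct (σ, ε) (WithLp.toLp 2 (fun j => if (j : ℕ) < 2 then 1 else 0) : EV (m+2))) u : ℝ) : ℂ))
        = (fun b b' => Complex.exp (-(2 * Real.pi * Complex.I) *
            (((if b then (1:ℝ) else -1) * u (σ.symm 0)
              + (if b' then (1:ℝ) else -1) * u (σ.symm 1) : ℝ) : ℂ)))
            (ε (σ.symm 0)) (ε (σ.symm 1)) := by
      intro ε
      rw [inner_pair]
    rw [Finset.sum_congr rfl (fun ε _ => hcg ε),
      Bsum2 hne (fun b b' => Complex.exp (-(2 * Real.pi * Complex.I) *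
            (((if b then (1:ℝ) else -1) * u (σ.symm 0)
              + (if b' then (1:ℝ) else -1) * u (σ.symm 1) : ℝ) : ℂ)))]
    have hm : Fintype.card (Fin (m+2)) - 2 = m := by simp
    rw [hm]
    congr 1
    have e1 : (if (true : Bool) then (1:ℝ) else -1) = 1 := rfl
    have e2 : (if (false : Bool) then (1:ℝ) else -1) = -1 := rfl
    rw [e1, e2]
    exact quad (u (σ.symm 0)) (u (σ.symm 1))
  rw [Finset.sum_congr rfl (fun σ _ => h1 σ)]
  have h2 : ∑ σ : Perm (Fin (m+2)), (2:ℂ) ^ m * ((2 * c (σ.symm 0)) * (2 * c (σ.symm 1)))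
      = ∑ σ : Perm (Fin (m+2)), (2:ℂ) ^ m * ((2 * c (σ 0)) * (2 * c (σ 1))) := by
    rw [← Equiv.sum_comp (Equiv.inv (Perm (Fin (m+2))))
      (fun σ => (2:ℂ) ^ m * ((2 * c (σ 0)) * (2 * c (σ 1))))]
    rfl
  rw [h2, ← Finset.mul_sum, Psum2 (fun p j => (2 * c p) * (2 * c j))]
  have h3 : ∑ p, ((∑ j, (2 * c p) * (2 * c j)) - (2 * c p) * (2 * c p))
      = 4 * ((∑ j, c j) ^ 2 - ∑ j, (c j) ^ 2) := by
    rw [Finset.sum_sub_distrib]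
    have hA : ∑ p, ∑ j, (2 * c p) * (2 * c j) = 4 * (∑ j, c j) ^ 2 := by
      rw [sq, Finset.sum_mul_sum, Finset.mul_sum]
      refine Finset.sum_congr rfl fun p _ => ?_
      rw [Finset.mul_sum]
      exact Finset.sum_congr rfl fun j _ => by ring
    have hB : ∑ p, (2 * c p) * (2 * c p) = 4 * ∑ p, (c p) ^ 2 := by
      rw [Finset.mul_sum]
      exact Finset.sum_congr rfl fun p _ => by ring
    rw [hA, hB]
    ring
  rw [h3]
  rw [Fintype.card_prod, Fintype.card_perm, Fintype.card_fun]
  simp only [Fintype.card_fin, Fintype.card_bool]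
  have hfac : ((m).factorial : ℂ) ≠ 0 := by exact_mod_cast (Nat.factorial_ne_zero _)
  have hm1 : ((m:ℂ) + 1) ≠ 0 := by exact_mod_cast (Nat.cast_add_one_ne_zero (R := ℂ) m)
  have hm2 : ((m:ℂ) + 2) ≠ 0 := by
    have h := Nat.cast_ne_zero (R := ℂ) (n := m + 2) |>.mpr (by omega)
    push_cast at h
    convert h using 1
  have h2n : ((2:ℂ)) ^ (m+2) ≠ 0 := pow_ne_zero _ two_ne_zero
  have hsum : ((((∑ j, Real.cos (2 * Real.pi * u j)) ^ 2
          - ∑ j, (Real.cos (2 * Real.pi * u j)) ^ 2 : ℝ)) : ℂ)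
      = (∑ j, c j) ^ 2 - ∑ j, (c j) ^ 2 := by
    push_cast [hc]
    norm_num
  rw [hsum]
  have hK : (((m + 2).factorial * 2 ^ (m + 2) : ℕ) : ℂ) ≠ 0 := by
    exact_mod_cast Nat.mul_ne_zero (Nat.factorial_ne_zero _) (by positivity)
  rw [eq_div_iff (mul_ne_zero hm2 hm1), inv_mul_eq_div, div_mul_eq_mul_div,
    div_eq_iff hK]
  rw [Nat.factorial_succ, Nat.factorial_succ]
  push_cast
  ring


open Finset in
lemma sum_pair_support {n : ℕ} {F : Fin n → ℕ} {i i' : Fin n} (hne : i ≠ i')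
    (h0 : ∀ j, j ≠ i → j ≠ i' → F j = 0) : ∑ j, F j = F i + F i' := by
  rw [← Finset.sum_pair hne]
  refine (Finset.sum_subset (Finset.subset_univ _) ?_).symm
  intro x _ hx
  simp only [Finset.mem_insert, Finset.mem_singleton, not_or] at hx
  exact h0 x hx.1 hx.2

open Finset in
lemma sum_single_support {n : ℕ} {F : Fin n → ℕ} {i : Fin n}
    (h0 : ∀ j, j ≠ i → F j = 0) : ∑ j, F j = F i :=
  Finset.sum_eq_single i (fun j _ hj => h0 j hj) (by simp)

open Finset in
lemma clique_bound {n : ℕ} (k : ℕ) (C : (Fin n → ℤ) → Fin k)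
    (hC : ∀ u v : Fin n → ℤ, (∑ i, (u i - v i).natAbs) = 2 → C u ≠ C v) : 2 * n ≤ k := by
  classical
  set g : Fin n ⊕ Fin n → (Fin n → ℤ) := fun a =>
    Sum.elim (fun i => fun j => if j = i then (1 : ℤ) else 0)
      (fun i => fun j => if j = i then (-1 : ℤ) else 0) a with hg
  have hdist : ∀ a b : Fin n ⊕ Fin n, a ≠ b → (∑ j, (g a j - g b j).natAbs) = 2 := by
    rintro (i | i) (i' | i') hab
    · have hne : i ≠ i' := fun hc => hab (by rw [hc])
      rw [sum_pair_support hne (fun j hj hj' => by simp [hg, hj, hj'])]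
      simp [hg, hne, hne.symm]
    · by_cases hii : i = i'
      · subst hii
        rw [sum_single_support (i := i) (fun j hj => by simp [hg, hj])]
        simp [hg]
      · rw [sum_pair_support hii (fun j hj hj' => by simp [hg, hj, hj'])]
        simp [hg, hii, Ne.symm hii]
    · by_cases hii : i = i'
      · subst hii
        rw [sum_single_support (i := i) (fun j hj => by simp [hg, hj])]
        simp [hg]
      · rw [sum_pair_support hii (fun j hj hj' => by simp [hg, hj, hj'])]
        simp [hg, hii, Ne.symm hii]
    · have hne : i ≠ i' := fun hc => hab (by rw [hc])
      rw [sum_pair_support hne (fun j hj hj' => by simp [hg, hj, hj'])]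
      simp [hg, hne, hne.symm]
  have hinj : Function.Injective (C ∘ g) := by
    intro a b hab
    by_contra hne
    exact hC (g a) (g b) (hdist a b hne) hab
  calc 2 * n = Fintype.card (Fin n ⊕ Fin n) := by simp [two_mul]
    _ ≤ Fintype.card (Fin k) := Fintype.card_le_of_injective _ hinj
    _ = k := by simp


open Finset in
lemma coloring_exists {n : ℕ} (hn : 1 ≤ n) :
    ∃ C : (Fin n → ℤ) → Fin (2 * n), ∀ u v : Fin n → ℤ,
      (∑ i, (u i - v i).natAbs) = 2 → C u ≠ C v := by
  classical
  set L : (Fin n → ℤ) → ℤ := fun u => ∑ i : Fin n, (2 * (i : ℤ) + 1) * u i with hL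
  have hpos : (0 : ℤ) < 2 * n := by positivity
  refine ⟨fun u => ⟨((L u / 2) % (2 * n : ℤ)).toNat, ?_⟩, ?_⟩
  · have h0 : 0 ≤ (L u / 2) % (2 * n : ℤ) := Int.emod_nonneg _ hpos.ne'
    have h1 : (L u / 2) % (2 * n : ℤ) < 2 * n := Int.emod_lt_of_pos _ hpos
    omega
  · intro u v h hCeq
    set d : Fin n → ℤ := fun i => u i - v i with hd
    -- Δ = L u - L v
    have hΔ : L u - L v = ∑ i : Fin n, (2 * (i : ℤ) + 1) * d i := by
      rw [hL, ← Finset.sum_sub_distrib]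
      exact Finset.sum_congr rfl fun i _ => by simp [hd]; ring
    set Δ : ℤ := ∑ i : Fin n, (2 * (i : ℤ) + 1) * d i with hΔdef
    -- sum of |d i| is 2
    have habs : ∑ i, |d i| = 2 := by
      have : ∀ i : Fin n, |d i| = ((d i).natAbs : ℤ) := fun i => Int.abs_eq_natAbs _
      rw [Finset.sum_congr rfl fun i _ => this i]
      exact_mod_cast congrArg (Nat.cast : ℕ → ℤ) h
    -- (a) Δ is even
    have heven : (2 : ℤ) ∣ Δ := by
      have hsplit : Δ = 2 * (∑ i : Fin n, (i : ℤ) * d i) + ∑ i : Fin n, d i := by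
        rw [hΔdef, Finset.mul_sum, ← Finset.sum_add_distrib]
        exact Finset.sum_congr rfl fun i _ => by ring
      have hdvd : (2 : ℤ) ∣ ∑ i : Fin n, (d i - |d i|) := by
        refine Finset.dvd_sum fun i _ => ?_
        rcases abs_cases (d i) with ⟨hh, _⟩ | ⟨hh, _⟩ <;> rw [hh]
        · simp
        · exact ⟨d i, by ring⟩
      rw [Finset.sum_sub_distrib, habs] at hdvd
      rw [hsplit]
      omega
    -- (c) |Δ| ≤ 4n - 2
    have hbound : |Δ| ≤ 4 * n - 2 := by
      calc |Δ| ≤ ∑ i : Fin n, |(2 * (i : ℤ) + 1) * d i| := Finset.abs_sum_le_sum_abs _ _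
        _ ≤ ∑ i : Fin n, (2 * (n : ℤ) - 1) * |d i| := by
            refine Finset.sum_le_sum fun i _ => ?_
            rw [abs_mul]
            have h1 : |2 * (i : ℤ) + 1| = 2 * (i : ℤ) + 1 := abs_of_nonneg (by positivity)
            rw [h1]
            have h2 : (i : ℤ) ≤ (n : ℤ) - 1 := by
              have := i.isLt
              omega
            exact mul_le_mul_of_nonneg_right (by omega) (abs_nonneg _)
        _ = (2 * (n : ℤ) - 1) * 2 := by rw [← Finset.mul_sum, habs]
        _ = 4 * n - 2 := by ring
    -- (b) Δ ≠ 0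
    have hne : Δ ≠ 0 := by
      have hex : ∃ i, d i ≠ 0 := by
        by_contra hno
        push_neg at hno
        have h0 : ∑ i : Fin n, (u i - v i).natAbs = 0 :=
          Finset.sum_eq_zero fun i _ => by
            rw [show u i - v i = 0 from hno i, Int.natAbs_zero]
        omega
      obtain ⟨i, hi⟩ := hex
      have hsplit : (d i).natAbs + ∑ j ∈ Finset.univ.erase i, (d j).natAbs = 2 :=
        (Finset.add_sum_erase Finset.univ (fun j => (d j).natAbs)
          (Finset.mem_univ i)).trans h
      have hi1 : 1 ≤ (d i).natAbs := Int.natAbs_pos.mpr hi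
      rcases Nat.lt_or_ge (d i).natAbs 2 with hcase | hcase
      · -- natAbs d i = 1, second support point j
        have hdi : (d i).natAbs = 1 := by omega
        have hrest : ∑ j ∈ Finset.univ.erase i, (d j).natAbs = 1 := by omega
        have hexj : ∃ j ∈ Finset.univ.erase i, (d j).natAbs ≠ 0 := by
          by_contra hno
          push_neg at hno
          rw [Finset.sum_eq_zero (fun j hj => hno j hj)] at hrest
          omega
        obtain ⟨j, hjmem, hj0⟩ := hexj
        have hij : j ≠ i := (Finset.mem_erase.mp hjmem).1
        have hsplit2 : (d j).natAbs
            + ∑ l ∈ (Finset.univ.erase i).erase j, (d l).natAbs = 1 :=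
          (Finset.add_sum_erase (Finset.univ.erase i) (fun l => (d l).natAbs)
            hjmem).trans hrest
        have hdj : (d j).natAbs = 1 := by omega
        have hrest2 : ∀ l, l ≠ i → l ≠ j → d l = 0 := by
          intro l hli hlj
          have hlmem : l ∈ (Finset.univ.erase i).erase j := by
            simp [Finset.mem_erase, hli, hlj]
          have hz : ∑ l ∈ (Finset.univ.erase i).erase j, (d l).natAbs = 0 := by omega
          have := (Finset.sum_eq_zero_iff.mp hz) l hlmem
          omega
        have hΔval : Δ = (2 * (i : ℤ) + 1) * d i + (2 * (j : ℤ) + 1) * d j := by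
          rw [hΔdef, ← Finset.add_sum_erase _ _ (Finset.mem_univ i),
            ← Finset.add_sum_erase _ _ (Finset.mem_erase.mpr ⟨hij, Finset.mem_univ j⟩)]
          rw [Finset.sum_eq_zero fun l hl => ?_]
          · ring
          · have hl' := Finset.mem_erase.mp hl
            have hl'' := Finset.mem_erase.mp hl'.2
            rw [hrest2 l hl''.1 hl'.1]
            ring
        have hvi : d i = 1 ∨ d i = -1 := by omega
        have hvj : d j = 1 ∨ d j = -1 := by omega
        have hijZ : (i : ℤ) ≠ (j : ℤ) := by
          intro hc
          exact hij (Fin.ext (by exact_mod_cast hc.symm))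
        rcases hvi with hvi | hvi <;> rcases hvj with hvj | hvj <;>
          rw [hΔval, hvi, hvj] <;> intro hc <;> omega
      · -- natAbs d i = 2, unique support
        have hdi : (d i).natAbs = 2 := by omega
        have hrest : ∀ j, j ≠ i → d j = 0 := by
          intro j hji
          have hz : ∑ j ∈ Finset.univ.erase i, (d j).natAbs = 0 := by omega
          have := (Finset.sum_eq_zero_iff.mp hz) j
            (Finset.mem_erase.mpr ⟨hji, Finset.mem_univ j⟩)
          omega
        have hΔval : Δ = (2 * (i : ℤ) + 1) * d i := by
          rw [hΔdef]
          exact Finset.sum_eq_single i (fun j _ hj => by rw [hrest j hj]; ring)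
            (fun hh => absurd (Finset.mem_univ i) hh)
        have hvi : d i = 2 ∨ d i = -2 := by omega
        have hipos : (0 : ℤ) ≤ (i : ℤ) := by positivity
        rcases hvi with hvi | hvi <;> rw [hΔval, hvi] <;> intro hc <;> omega
    -- derive contradiction from equal colors
    obtain ⟨k, hk⟩ := heven
    have hdiv : L u / 2 = L v / 2 + k := by
      have : L u = L v + k * 2 := by omega
      rw [this, Int.add_mul_ediv_right _ _ (by norm_num : (2:ℤ) ≠ 0)]
    have hmodeq : (L u / 2) % (2 * n : ℤ) = (L v / 2) % (2 * n : ℤ) := by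
      have hCeq' : ((L u / 2) % (2 * n : ℤ)).toNat = ((L v / 2) % (2 * n : ℤ)).toNat := by
        simpa [Fin.mk.injEq] using hCeq
      have h0u : 0 ≤ (L u / 2) % (2 * n : ℤ) := Int.emod_nonneg _ hpos.ne'
      have h0v : 0 ≤ (L v / 2) % (2 * n : ℤ) := Int.emod_nonneg _ hpos.ne'
      omega
    have hdvd : (2 * n : ℤ) ∣ k := by
      have : (L u / 2 - L v / 2) % (2 * n : ℤ) = 0 := by
        rw [Int.sub_emod, hmodeq]
        simp
      have h2 : (2 * n : ℤ) ∣ (L u / 2 - L v / 2) := Int.dvd_of_emod_eq_zero this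
      rwa [hdiv, add_sub_cancel_left] at h2
    obtain ⟨c, hc⟩ := hdvd
    obtain ⟨hb1, hb2⟩ := abs_le.mp hbound
    rcases lt_trichotomy c 0 with hcc | hcc | hcc
    · have h1 : 2 * (n : ℤ) * c ≤ 2 * (n : ℤ) * (-1) :=
        mul_le_mul_of_nonneg_left (by omega) (by positivity)
      omega
    · rw [hcc, mul_zero] at hc
      apply hne
      omega
    · have h1 : 2 * (n : ℤ) * 1 ≤ 2 * (n : ℤ) * c :=
        mul_le_mul_of_nonneg_left (by omega) (by positivity)
      omega

/-- The spectral bound is sharp for `χ(ℤⁿ, B¹₂) = 2n`: with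
`c = 1/(2n−1)` on the orbit of `2ϖ₁` and `1 − c` on the orbit of `ϖ₂` (root system `Cₙ`),
one has `c·T_{2ϖ₁} + (1−c)·T_{ϖ₂} = (2n z₁² − 1)/(2n−1) ≥ −1/(2n−1)` on the Chebyshev
image, giving `χ(ℤⁿ, B¹₂) ≥ 2n`, matching the known upper bound. -/
theorem statement16 {n : ℕ} (hn : 1 ≤ n) :
    -- the Chebyshev identity on the image:
    (∀ u : EV n,
      (1 / (2 * n - 1) : ℂ) * cGencos ((2 : ℝ) • cϖ₁) u
          + (1 - 1 / (2 * n - 1) : ℂ) * cGencos cϖ₂ u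
        = (2 * n * (cGencos cϖ₁ u) ^ 2 - 1) / (2 * n - 1)) ∧
    -- the lower bound `−1/(2n−1)` on the image:
    (∀ u : EV n, -(1 / (2 * (n : ℝ) - 1)) ≤
      ((1 / (2 * n - 1) : ℂ) * cGencos ((2 : ℝ) • cϖ₁) u
        + (1 - 1 / (2 * n - 1) : ℂ) * cGencos cϖ₂ u).re) ∧
    -- `χ(ℤⁿ, B¹₂) = 2n`:
    (∃ C : (Fin n → ℤ) → Fin (2 * n), ∀ u v : Fin n → ℤ,
      (∑ i, (u i - v i).natAbs) = 2 → C u ≠ C v) ∧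
    (∀ (k : ℕ) (C : (Fin n → ℤ) → Fin k),
      (∀ u v : Fin n → ℤ, (∑ i, (u i - v i).natAbs) = 2 → C u ≠ C v) → 2 * n ≤ k) := by
  obtain ⟨m, rfl⟩ : ∃ m, n = m + 1 := ⟨n - 1, by omega⟩
  have hT1 : ∀ u : EV (m + 1), cGencos cϖ₁ u
      = ((∑ j, Real.cos (2 * Real.pi * (1 * u j)) : ℝ) : ℂ) / ((m : ℂ) + 1) :=
    fun u => gencos_single 1 u
  have hsm : ((2 : ℝ) • cϖ₁ : EV (m + 1))
      = (WithLp.toLp 2 (fun j => if (j : ℕ) = 0 then (2 : ℝ) else 0) : EV (m + 1)) := by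
    ext j
    by_cases hj : (j : ℕ) = 0 <;> simp [cϖ₁, hj, PiLp.smul_apply] <;> simp_all [Fin.val_eq_zero_iff]
  have hT2 : ∀ u : EV (m + 1), cGencos ((2 : ℝ) • cϖ₁) u
      = ((∑ j, Real.cos (2 * Real.pi * (2 * u j)) : ℝ) : ℂ) / ((m : ℂ) + 1) :=
    fun u => by rw [hsm]; exact gencos_single 2 u
  have hdouble : ∀ x : ℝ, Real.cos (2 * Real.pi * (2 * x))
      = 2 * (Real.cos (2 * Real.pi * (1 * x))) ^ 2 - 1 := fun x => by
    rw [show 2 * Real.pi * (2 * x) = 2 * (2 * Real.pi * (1 * x)) by ring, Real.cos_two_mul]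
  have hp1 : ∀ u : EV (m + 1),
      (1 / (2 * ((m + 1 : ℕ) : ℂ) - 1)) * cGencos ((2 : ℝ) • cϖ₁) u
        + (1 - 1 / (2 * ((m + 1 : ℕ) : ℂ) - 1)) * cGencos cϖ₂ u
      = (2 * ((m + 1 : ℕ) : ℂ) * (cGencos cϖ₁ u) ^ 2 - 1)
          / (2 * ((m + 1 : ℕ) : ℂ) - 1) := by
    cases m with
    | zero =>
      intro u
      have hϖeq : (cϖ₂ : EV 1) = cϖ₁ := by
        ext j
        rw [Fin.eq_zero j]
        norm_num [cϖ₁, cϖ₂]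
      rw [hϖeq, hT1 u, hT2 u]
      simp only [Fin.sum_univ_succ, Fin.sum_univ_zero, add_zero]
      rw [hdouble (u 0)]
      push_cast
      ring_nf
    | succ m =>
      intro u
      have hc3 : cGencos (cϖ₂ : EV (m + 1 + 1)) u
          = ((((∑ j, Real.cos (2 * Real.pi * u j)) ^ 2
              - ∑ j, (Real.cos (2 * Real.pi * u j)) ^ 2 : ℝ)) : ℂ)
            / (((m : ℂ) + 2) * ((m : ℂ) + 1)) := gencos_pair (m := m) u
      have hQ : ∑ j, Real.cos (2 * Real.pi * (2 * u j))
          = 2 * (∑ j, (Real.cos (2 * Real.pi * (u j))) ^ 2) - ((m : ℝ) + 2) := by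
        rw [Finset.sum_congr rfl fun j _ => hdouble (u j), Finset.sum_sub_distrib,
          ← Finset.mul_sum, Finset.sum_const, Finset.card_univ]
        simp only [one_mul, Fintype.card_fin, nsmul_eq_mul, mul_one]
        push_cast
        ring
      rw [hT1 u, hT2 u, hc3]
      simp only [one_mul]
      rw [hQ]
      set P : ℝ := ∑ j : Fin (m + 1 + 1), Real.cos (2 * Real.pi * u j) with hP
      set R : ℝ := ∑ j : Fin (m + 1 + 1), (Real.cos (2 * Real.pi * u j)) ^ 2 with hR
      have h1 : ((m : ℂ) + 1) ≠ 0 := Nat.cast_add_one_ne_zero m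
      have h2 : ((m : ℂ) + 2) ≠ 0 := by
        have h' := Nat.cast_add_one_ne_zero (R := ℂ) (m + 1)
        push_cast at h'
        intro hc
        exact h' (by linear_combination hc)
      have h3 : (2 * (m : ℂ) + 3) ≠ 0 := by
        have h' := Nat.cast_add_one_ne_zero (R := ℂ) (2 * m + 2)
        push_cast at h'
        intro hc
        exact h' (by linear_combination hc)
      have h4 : (2 * ((m + 1 + 1 : ℕ) : ℂ) - 1) ≠ 0 := by
        intro hc
        apply h3
        push_cast at hc
        linear_combination hc
      have h5 : ((m : ℂ) + 1 + 1) ≠ 0 := by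
        intro hc
        exact h2 (by linear_combination hc)
      have h6 : (2 * ((m : ℂ) + 1 + 1) - 1) ≠ 0 := by
        intro hc
        exact h3 (by linear_combination hc)
      push_cast
      field_simp [h1, h2, h5, h6]
      ring
  refine ⟨hp1, ?_, coloring_exists hn, fun k C hC => clique_bound k C hC⟩
  intro u
  rw [hp1 u]
  have hz : cGencos cϖ₁ u
      = ((((∑ j, Real.cos (2 * Real.pi * (1 * u j))) / ((m : ℝ) + 1)) : ℝ) : ℂ) := by
    rw [hT1 u]
    push_cast
    ring
  set q : ℝ := (∑ j, Real.cos (2 * Real.pi * (1 * u j))) / ((m : ℝ) + 1) with hq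
  rw [hz]
  have hre : ((2 * ((m + 1 : ℕ) : ℂ) * ((q : ℂ)) ^ 2 - 1) / (2 * ((m + 1 : ℕ) : ℂ) - 1)).re
      = (2 * ((m + 1 : ℕ) : ℝ) * q ^ 2 - 1) / (2 * ((m + 1 : ℕ) : ℝ) - 1) := by
    rw [show (2 * ((m + 1 : ℕ) : ℂ) * ((q : ℂ)) ^ 2 - 1) / (2 * ((m + 1 : ℕ) : ℂ) - 1)
        = (((2 * ((m + 1 : ℕ) : ℝ) * q ^ 2 - 1) / (2 * ((m + 1 : ℕ) : ℝ) - 1) : ℝ) : ℂ) by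
      push_cast; ring]
    exact Complex.ofReal_re _
  rw [hre]
  have hD : (0 : ℝ) < 2 * ((m + 1 : ℕ) : ℝ) - 1 := by
    have : (0 : ℝ) ≤ (m : ℝ) := Nat.cast_nonneg m
    push_cast
    linarith
  rw [show -(1 / (2 * ((m + 1 : ℕ) : ℝ) - 1)) = (-1) / (2 * ((m + 1 : ℕ) : ℝ) - 1) by ring]
  rw [div_le_div_iff₀ hD hD]
  nlinarith [mul_nonneg (by positivity : (0:ℝ) ≤ 2 * ((m + 1 : ℕ) : ℝ) * q ^ 2) hD.le]
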